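/- Let A ⊆ ℝ^d, a ∈ A with reach(A, a) > 0, and let C be a closed cone contained in int(Tan(A,a)) ∪ {0}. Then there exists r > 0 such that (a + C) ∩ B(a, r) ⊆ A. -/

import Mathlib

open Metric Set Filter
open scoped ENNReal RealInnerProductSpace Topology NNReal

noncomputable section

variable {E : Type*} [NormedAddCommGroup E] [InnerProductSpace ℝ E]

/-- `x` has a unique nearest point in `A`. -/
def UnpPt (A : Set E) (x : E) : Prop :=
  ∃! a, a ∈ A ∧ dist x a = Metric.infDist x A

/-- The reach of `A` at a point `a` (Federer). -/
def locReach (A : Set E) (a : E) : ℝ≥0∞ :=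
  ⨆ (r : ℝ≥0) (_ : ∀ x : E, dist x a < (r : ℝ) → UnpPt A x), (r : ℝ≥0∞)

/-- The (global) reach of `A`. -/
def setReach (A : Set E) : ℝ≥0∞ := ⨅ a ∈ A, locReach A a

/-- The tangent cone of `A` at `a` in the sense of Federer. -/
def Tan (A : Set E) (a : E) : Set E :=
  {u | u = 0 ∨ ∃ (x : ℕ → E) (r : ℕ → ℝ),
    (∀ i, x i ∈ A ∧ x i ≠ a ∧ 0 < r i) ∧
    Tendsto x atTop (nhds a) ∧
    Tendsto (fun i => r i • (x i - a)) atTop (nhds u)}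

/-- The normal cone of `A` at `a`: the dual cone of the tangent cone. -/
def Nor (A : Set E) (a : E) : Set E :=
  {u | ∀ v ∈ Tan A a, ⟪u, v⟫ ≤ 0}
set_option linter.unusedSectionVars false

noncomputable def foot (A : Set E) (x : E) : E :=
  Classical.epsilon fun y => y ∈ A ∧ dist x y = Metric.infDist x A

lemma foot_spec {A : Set E} {x : E} (h : UnpPt A x) :
    foot A x ∈ A ∧ dist x (foot A x) = infDist x A := by
  obtain ⟨y, hy, -⟩ := h
  exact Classical.epsilon_spec (⟨y, hy⟩ : ∃ y, y ∈ A ∧ dist x y = Metric.infDist x A)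

lemma foot_eq {A : Set E} {x : E} (h : UnpPt A x) {y : E} (hy : y ∈ A)
    (hd : dist x y = infDist x A) : y = foot A x := by
  obtain ⟨z, -, huniq⟩ := id h
  rw [huniq y ⟨hy, hd⟩, huniq _ (foot_spec h)]

lemma mem_of_closure_unp {A : Set E} {x : E} (h : UnpPt A x) (hne : A.Nonempty)
    (hA : x ∈ closure A) : x ∈ A := by
  obtain ⟨y, ⟨hyA, hyd⟩, -⟩ := h
  rw [(mem_closure_iff_infDist_zero hne).1 hA] at hyd
  rwa [show y = x from (dist_eq_zero.1 hyd).symm] at hyA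

/-- Differentiability of `infDist` at a point with positive distance, given a continuous
selection of nearest points nearby. -/
lemma hasFDerivAt_infDist {B : Set E} {x0 y0 : E} (hy0 : y0 ∈ B)
    (hd : dist x0 y0 = infDist x0 B) (hpos : 0 < dist x0 y0) (g : E → E)
    (hg : ∀ᶠ x in 𝓝 x0, g x ∈ B ∧ dist x (g x) = infDist x B)
    (hgt : Tendsto g (𝓝 x0) (𝓝 y0)) :
    HasFDerivAt (fun x => infDist x B)
      (innerSL ℝ ((dist x0 y0)⁻¹ • (x0 - y0))) x0 := by
  have hBne : B.Nonempty := ⟨y0, hy0⟩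
  -- derivative of the squared distance
  have hsq : HasFDerivAt (fun x => (infDist x B) ^ 2)
      (innerSL ℝ ((2 : ℝ) • (x0 - y0))) x0 := by
    rw [hasFDerivAt_iff_isLittleO_nhds_zero, Asymptotics.isLittleO_iff]
    intro c hc
    have h1 : ∀ᶠ h : E in 𝓝 0, g (x0 + h) ∈ B ∧ dist (x0 + h) (g (x0 + h)) = infDist (x0 + h) B := by
      have : Tendsto (fun h : E => x0 + h) (𝓝 0) (𝓝 x0) := by
        simpa using (continuous_add_left x0).tendsto (0 : E)
      exact this.eventually hg
    have h2 : ∀ᶠ h : E in 𝓝 0, ‖g (x0 + h) - y0‖ < c / 4 := by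
      have : Tendsto (fun h : E => g (x0 + h)) (𝓝 0) (𝓝 y0) := by
        refine hgt.comp ?_
        simpa using (continuous_add_left x0).tendsto (0 : E)
      have := this.eventually (Metric.ball_mem_nhds y0 (by positivity : (0:ℝ) < c / 4))
      simpa [dist_eq_norm] using this
    have h3 : ∀ᶠ h : E in 𝓝 0, ‖h‖ < c / 2 := by
      filter_upwards [Metric.ball_mem_nhds (0 : E) (by positivity : (0:ℝ) < c / 2)] with h hh
      simpa [dist_eq_norm] using hh
    filter_upwards [h1, h2, h3] with h hg1 hg2 hg3
    set yx := g (x0 + h)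
    have keyUB : (infDist (x0 + h) B) ^ 2 - (infDist x0 B) ^ 2 - ⟪(2:ℝ) • (x0 - y0), h⟫ ≤ ‖h‖ ^ 2 := by
      have hle : infDist (x0 + h) B ≤ ‖(x0 - y0) + h‖ := by
        have := infDist_le_dist_of_mem (x := x0 + h) hy0
        rw [dist_eq_norm] at this
        calc infDist (x0 + h) B ≤ ‖x0 + h - y0‖ := this
        _ = ‖(x0 - y0) + h‖ := by congr 1; abel
      have hsq' : (infDist (x0 + h) B)^2 ≤ ‖(x0 - y0) + h‖^2 :=
        pow_le_pow_left₀ infDist_nonneg hle 2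
      have hx0 : (infDist x0 B)^2 = ‖x0 - y0‖^2 := by rw [← hd, dist_eq_norm]
      have hexp : ‖(x0 - y0) + h‖^2 = ‖x0 - y0‖^2 + 2 * ⟪x0 - y0, h⟫ + ‖h‖^2 :=
        norm_add_sq_real _ _
      have : ⟪(2:ℝ) • (x0 - y0), h⟫ = 2 * ⟪x0 - y0, h⟫ := by
        rw [real_inner_smul_left]
      linarith [hsq', hexp.le]
    have keyLB : -(‖h‖^2 + 2 * (c/4) * ‖h‖) ≤
        (infDist (x0 + h) B) ^ 2 - (infDist x0 B) ^ 2 - ⟪(2:ℝ) • (x0 - y0), h⟫ := by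
      have heq : (infDist (x0 + h) B)^2 = ‖(x0 - yx) + h‖^2 := by
        rw [← hg1.2, dist_eq_norm]; congr 2; abel
      have hexp : ‖(x0 - yx) + h‖^2 = ‖x0 - yx‖^2 + 2 * ⟪x0 - yx, h⟫ + ‖h‖^2 :=
        norm_add_sq_real _ _
      have hge : ‖x0 - y0‖ ≤ ‖x0 - yx‖ := by
        have h' := infDist_le_dist_of_mem (x := x0) hg1.1
        rw [← hd] at h'
        rw [dist_eq_norm, dist_eq_norm] at h'
        exact h'
      have hx0 : (infDist x0 B)^2 = ‖x0 - y0‖^2 := by rw [← hd, dist_eq_norm]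
      have hsplit : ⟪x0 - yx, h⟫ = ⟪x0 - y0, h⟫ + ⟪y0 - yx, h⟫ := by
        rw [← inner_add_left]; congr 1; abel
      have hbd : -(‖y0 - yx‖ * ‖h‖) ≤ ⟪y0 - yx, h⟫ := by
        have := real_inner_le_norm (y0 - yx) (-h)
        simp only [inner_neg_right, norm_neg] at this
        linarith
      have hyxb : ‖y0 - yx‖ ≤ c / 4 := by
        rw [norm_sub_rev]; exact hg2.le
      have h2i : ⟪(2:ℝ) • (x0 - y0), h⟫ = 2 * ⟪x0 - y0, h⟫ := by rw [real_inner_smul_left]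
      nlinarith [pow_le_pow_left₀ (norm_nonneg (x0 - y0)) hge 2, norm_nonneg h,
        mul_le_mul_of_nonneg_right hyxb (norm_nonneg h)]
    have habs : |(infDist (x0 + h) B) ^ 2 - (infDist x0 B) ^ 2 - ⟪(2:ℝ) • (x0 - y0), h⟫| ≤
        ‖h‖^2 + 2 * (c/4) * ‖h‖ := by
      rw [abs_le]
      constructor
      · exact keyLB
      · nlinarith [norm_nonneg h, hc.le]
    have : ‖h‖^2 + 2 * (c/4) * ‖h‖ ≤ c * ‖h‖ := by nlinarith [norm_nonneg h, hg3.le]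
    calc ‖(infDist (x0 + h) B) ^ 2 - (infDist x0 B) ^ 2 - (innerSL ℝ ((2:ℝ) • (x0 - y0))) h‖
        = |(infDist (x0 + h) B) ^ 2 - (infDist x0 B) ^ 2 - ⟪(2:ℝ) • (x0 - y0), h⟫| := by
          rw [Real.norm_eq_abs, innerSL_apply_apply]
      _ ≤ ‖h‖^2 + 2 * (c/4) * ‖h‖ := habs
      _ ≤ c * ‖h‖ := this
  -- take square roots
  have hne : (infDist x0 B) ^ 2 ≠ 0 := by
    rw [← hd]; positivity
  have hcomp := (Real.hasDerivAt_sqrt hne).comp_hasFDerivAt x0 hsq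
  have heq : (Real.sqrt ∘ fun x => (infDist x B) ^ 2) = fun x => infDist x B := by
    funext x
    simp [Function.comp, Real.sqrt_sq infDist_nonneg]
  rw [heq] at hcomp
  refine hcomp.congr_fderiv ?_
  symm
  have hsqrt : Real.sqrt ((infDist x0 B)^2) = dist x0 y0 := by
    rw [Real.sqrt_sq infDist_nonneg, hd]
  rw [hsqrt]
  ext v
  simp only [innerSL_apply_apply, ContinuousLinearMap.coe_smul', Pi.smul_apply, innerSL_apply_apply]
  rw [real_inner_smul_left, real_inner_smul_left]
  field_simp
  rw [smul_eq_mul]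
  field_simp

section Part2
variable {E : Type*} [NormedAddCommGroup E] [InnerProductSpace ℝ E]

lemma foot_tendsto [ProperSpace E] {A : Set E} {a : E} {ρ : ℝ} (ha : a ∈ A)
    (hρ : ∀ x, dist x a < ρ → UnpPt A x) {x0 : E} (hx0 : dist x0 a < ρ / 2) :
    Tendsto (foot A) (𝓝 x0) (𝓝 (foot A x0)) := by
  have hρ2pos : 0 < ρ / 2 := lt_of_le_of_lt dist_nonneg hx0
  have hρpos : 0 < ρ := by linarith
  have hx0' : dist x0 a < ρ := by linarith
  have hAne : A.Nonempty := ⟨a, ha⟩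
  set y0 := foot A x0 with hy0
  set r : ℝ := dist x0 a / 2 + ρ / 4 with hr
  clear_value r
  have hx0r : dist x0 a < r := by
    have := dist_nonneg (x := x0) (y := a); linarith
  have hrρ : 2 * r < ρ := by linarith
  apply tendsto_of_subseq_tendsto
  intro ns hns
  have hev : ∀ᶠ n in atTop, dist (ns n) a < r := by
    have hmem : ball a r ∈ 𝓝 x0 := isOpen_ball.mem_nhds (by simpa [mem_ball] using hx0r)
    filter_upwards [hns.eventually hmem] with n hn
    simpa [mem_ball] using hn
  obtain ⟨N, hN⟩ := eventually_atTop.1 hev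
  set g : ℕ → E := fun n => foot A (ns (n + N)) with hg
  have hgood : ∀ n : ℕ, g n ∈ A ∧ dist (ns (n + N)) (g n) = infDist (ns (n + N)) A := by
    intro n
    exact foot_spec (hρ _ (lt_trans (hN (n + N) (Nat.le_add_left _ _)) (by linarith)))
  have hgb : ∀ n : ℕ, g n ∈ closedBall a (2 * r) := by
    intro n
    have h1 : dist (ns (n + N)) (g n) ≤ dist (ns (n + N)) a :=
      (hgood n).2.le.trans (infDist_le_dist_of_mem ha)
    have h2 : dist (ns (n + N)) a < r := hN (n + N) (Nat.le_add_left _ _)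
    have : dist (g n) a ≤ dist (g n) (ns (n + N)) + dist (ns (n + N)) a := dist_triangle _ _ _
    rw [dist_comm (g n) (ns (n + N))] at this
    simp only [mem_closedBall]
    linarith
  obtain ⟨z, hz, φ, hφ, hgz⟩ := (isCompact_closedBall a (2 * r)).tendsto_subseq hgb
  have hnsφ : Tendsto (fun n => ns (φ n + N)) atTop (𝓝 x0) := by
    exact hns.comp ((tendsto_add_atTop_nat N).comp hφ.tendsto_atTop)
  have hzA : z ∈ A := by
    refine mem_of_closure_unp (hρ z ?_) hAne (mem_closure_of_tendsto hgz
      (Eventually.of_forall fun n => (hgood (φ n)).1))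
    exact lt_of_le_of_lt (mem_closedBall.1 hz) hrρ
  have hzd : dist x0 z = infDist x0 A := by
    have hL : Tendsto (fun n => dist (ns (φ n + N)) (g (φ n))) atTop (𝓝 (dist x0 z)) :=
      hnsφ.dist hgz
    have hR : Tendsto (fun n => infDist (ns (φ n + N)) A) atTop (𝓝 (infDist x0 A)) :=
      ((continuous_infDist_pt A).tendsto x0).comp hnsφ
    have : (fun n => dist (ns (φ n + N)) (g (φ n))) = fun n => infDist (ns (φ n + N)) A := by
      funext n; exact (hgood (φ n)).2
    rw [this] at hL
    exact tendsto_nhds_unique hL hR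
  have hzy0 : z = y0 := foot_eq (hρ x0 hx0') hzA hzd
  exact ⟨fun n => φ n + N, by rw [← hzy0]; exact hgz⟩

end Part2

section Part3
variable {E : Type*} [NormedAddCommGroup E] [InnerProductSpace ℝ E]

set_option maxHeartbeats 1000000 in
lemma reach_ray [ProperSpace E] {A : Set E} {a : E} {ρ : ℝ} (ha : a ∈ A)
    (hρ : ∀ x, dist x a < ρ → UnpPt A x) {z0 : E} (hz0 : dist z0 a < ρ / 8)
    (hpos : 0 < infDist z0 A) :
    ∀ b ∈ A, ⟪(infDist z0 A)⁻¹ • (z0 - foot A z0), b - foot A z0⟫ ≤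
      ‖b - foot A z0‖ ^ 2 / (2 * (ρ / 8)) := by
  have hρ8pos : 0 < ρ / 8 := lt_of_le_of_lt dist_nonneg hz0
  have hρpos : 0 < ρ := by linarith
  have hz0ρ : dist z0 a < ρ := by linarith
  set R : ℝ := ρ / 8 with hR
  set ξ : E := foot A z0 with hξ
  set t0 : ℝ := infDist z0 A with ht0
  obtain ⟨hξA, hξd⟩ := foot_spec (hρ z0 hz0ρ)
  rw [← hξ] at hξA hξd
  set w : E := t0⁻¹ • (z0 - ξ) with hw
  have ht0R : t0 < R := lt_of_le_of_lt (infDist_le_dist_of_mem ha) hz0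
  have hnz : z0 - ξ ≠ 0 := by
    intro hcon
    have : dist z0 ξ = 0 := by rw [dist_eq_norm, hcon, norm_zero]
    rw [hξd] at this; linarith
  have hwn : ‖w‖ = 1 := by
    rw [hw, norm_smul, Real.norm_eq_abs, abs_inv, abs_of_pos hpos, ← dist_eq_norm, hξd,
      ← ht0, inv_mul_cancel₀ (ne_of_gt hpos)]
  clear_value R ξ t0 w
  -- derivative of the distance function everywhere in the half ball
  have hderiv : ∀ x : E, dist x a < ρ / 2 → 0 < infDist x A →
      HasFDerivAt (fun y => infDist y A)
        (innerSL ℝ ((infDist x A)⁻¹ • (x - foot A x))) x := by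
    intro x hx hxpos
    have hxρ : dist x a < ρ := by linarith
    obtain ⟨hfA, hfd⟩ := foot_spec (hρ x hxρ)
    have hg : ∀ᶠ y in 𝓝 x, foot A y ∈ A ∧ dist y (foot A y) = infDist y A := by
      have : ball a ρ ∈ 𝓝 x := isOpen_ball.mem_nhds (by simpa [mem_ball] using hxρ)
      filter_upwards [this] with y hy
      exact foot_spec (hρ y (by simpa [mem_ball] using hy))
    have := hasFDerivAt_infDist hfA hfd (by rw [hfd]; exact hxpos) (foot A) hg
      (foot_tendsto ha hρ hx)
    rwa [hfd] at this
  -- the key claim: points on the sphere of radius R with large distance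
  have claim : ∀ c : ℝ, 0 ≤ c → c < 1 → ∃ x : E, dist x z0 = R ∧ t0 + c * R ≤ infDist x A := by
    intro c hc0 hc1
    set f : E → ℝ := fun x => infDist x A - c * ‖x - z0‖ with hf
    have hfc : ContinuousOn f (closedBall z0 R) :=
      ((continuous_infDist_pt A).sub
        (continuous_const.mul ((continuous_id.sub continuous_const).norm))).continuousOn
    obtain ⟨xc, hxcK, hmax⟩ := (isCompact_closedBall z0 R).exists_isMaxOn
      ⟨z0, mem_closedBall_self hρ8pos.le⟩ hfc
    have hfz0 : f z0 = t0 := by simp [hf, ← ht0]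
    have hfxc : t0 ≤ f xc := by rw [← hfz0]; exact hmax (mem_closedBall_self hρ8pos.le)
    have hKball : ∀ x ∈ closedBall z0 R, dist x a < ρ / 2 := by
      intro x hx
      have := dist_triangle x z0 a
      have hx' : dist x z0 ≤ R := mem_closedBall.1 hx
      linarith
    by_cases hxcb : dist xc z0 = R
    · refine ⟨xc, hxcb, ?_⟩
      have : c * ‖xc - z0‖ = c * R := by rw [← dist_eq_norm, hxcb]
      have := hfxc
      simp only [hf] at this
      rw [← dist_eq_norm, hxcb] at this
      linarith
    · exfalso
      have hxcint : dist xc z0 < R := lt_of_le_of_ne (mem_closedBall.1 hxcK) hxcb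
      have hKnhds : closedBall z0 R ∈ 𝓝 xc :=
        Filter.mem_of_superset (isOpen_ball.mem_nhds (by simpa [mem_ball] using hxcint))
          ball_subset_closedBall
      have hloc : IsLocalMax f xc := hmax.isLocalMax hKnhds
      by_cases hxz : xc = z0
      · -- the max cannot be at the center: u grows at unit rate along w
        have hd0 : HasFDerivAt (fun y => infDist y A) (innerSL ℝ w) z0 := by
          have := hderiv z0 (by linarith) (by rw [← ht0]; exact hpos)
          rwa [← ht0, ← hξ, ← hw] at this
        have hlineaux : HasDerivAt (fun ε : ℝ => z0 + ε • w) w 0 := by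
          simpa using (((hasDerivAt_id (0:ℝ)).smul_const w).const_add z0)
        have hline : HasDerivAt (fun ε : ℝ => infDist (z0 + ε • w) A) 1 0 := by
          have h8 : HasFDerivAt (fun y => infDist y A) (innerSL ℝ w)
              ((fun ε : ℝ => z0 + ε • w) 0) := by simpa using hd0
          have h9 := h8.comp_hasDerivAt 0 hlineaux
          have h10 : (innerSL ℝ w) w = 1 := by
            simp only [innerSL_apply_apply]
            rw [real_inner_self_eq_norm_sq, hwn]; norm_num
          rwa [h10] at h9
        have hslope := hasDerivAt_iff_tendsto_slope.1 hline
        have hslope' : Tendsto (slope (fun ε : ℝ => infDist (z0 + ε • w) A) 0)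
            (𝓝[>] 0) (𝓝 1) :=
          hslope.mono_left (nhdsWithin_mono _ (fun x hx => ne_of_gt hx))
        have hev1 : ∀ᶠ ε in 𝓝[>] (0:ℝ),
            c < slope (fun ε : ℝ => infDist (z0 + ε • w) A) 0 ε :=
          hslope'.eventually (lt_mem_nhds hc1)
        have hev2 : ∀ᶠ ε in 𝓝[>] (0:ℝ), ε < R :=
          mem_nhdsWithin_of_mem_nhds (isOpen_Iio.mem_nhds (by simpa using hρ8pos))
        have hev3 : ∀ᶠ ε in 𝓝[>] (0:ℝ), (0:ℝ) < ε := self_mem_nhdsWithin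
        obtain ⟨ε, hsl, hεR, hε0⟩ := ((hev1.and (hev2.and hev3)).exists :
          ∃ ε : ℝ, _ ∧ ε < R ∧ (0:ℝ) < ε)
        have hslv : slope (fun ε : ℝ => infDist (z0 + ε • w) A) 0 ε =
            (infDist (z0 + ε • w) A - t0) / ε := by
          rw [slope_def_field]
          simp [← ht0]
        rw [hslv] at hsl
        have hgt : t0 + c * ε < infDist (z0 + ε • w) A := by
          have := (lt_div_iff₀ hε0).1 hsl
          linarith
        have hmem : z0 + ε • w ∈ closedBall z0 R := by
          have hdd : dist (z0 + ε • w) z0 = ε := by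
            rw [dist_eq_norm]
            simp [norm_smul, hwn, abs_of_pos hε0]
          rw [mem_closedBall, hdd]; exact hεR.le
        have hcon := hmax hmem
        have hfxceq : f xc = t0 := by rw [hxz, hfz0]
        rw [hfxceq] at hcon
        have hcon' : infDist (z0 + ε • w) A - c * ε ≤ t0 := by
          simpa [hf, norm_smul, hwn, abs_of_pos hε0] using hcon
        linarith
      · -- interior max away from the center: gradient condition is contradictory
        have hupos : 0 < infDist xc A := by
          have : (0:ℝ) ≤ c * ‖xc - z0‖ := by positivity
          simp only [hf] at hfxc
          linarith
        have h1 : HasFDerivAt (fun y => infDist y A)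
            (innerSL ℝ ((infDist xc A)⁻¹ • (xc - foot A xc))) xc :=
          hderiv xc (hKball xc hxcK) hupos
        have hdxz : 0 < dist xc z0 := dist_pos.2 hxz
        have h2' : HasFDerivAt (fun y => infDist y {z0})
            (innerSL ℝ ((dist xc z0)⁻¹ • (xc - z0))) xc := by
          refine hasFDerivAt_infDist rfl ?_ ?_ (fun _ => z0) ?_ tendsto_const_nhds
          · rw [infDist_singleton]
          · exact hdxz
          · filter_upwards with y
            exact ⟨rfl, (infDist_singleton).symm⟩
        have h2 : HasFDerivAt (fun y : E => ‖y - z0‖)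
            (innerSL ℝ ((dist xc z0)⁻¹ • (xc - z0))) xc := by
          have : (fun y : E => infDist y {z0}) = fun y : E => ‖y - z0‖ := by
            funext y; rw [infDist_singleton, dist_eq_norm]
          rwa [this] at h2'
        have hfd : HasFDerivAt f
            (innerSL ℝ ((infDist xc A)⁻¹ • (xc - foot A xc)) -
              c • innerSL ℝ ((dist xc z0)⁻¹ • (xc - z0))) xc :=
          h1.sub (h2.const_mul c)
        have hzero := hloc.hasFDerivAt_eq_zero hfd
        -- evaluate at the unit vector ŵc
        set wc : E := (infDist xc A)⁻¹ • (xc - foot A xc) with hwc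
        have hfoot := foot_spec (hρ xc (by linarith [hKball xc hxcK]))
        have hwcn : ‖wc‖ = 1 := by
          rw [hwc, norm_smul, Real.norm_eq_abs, abs_inv, abs_of_pos hupos,
            ← dist_eq_norm, hfoot.2, inv_mul_cancel₀ (ne_of_gt hupos)]
        set nc : E := (dist xc z0)⁻¹ • (xc - z0) with hnc
        have hncn : ‖nc‖ = 1 := by
          rw [hnc, norm_smul, Real.norm_eq_abs, abs_inv, abs_of_pos hdxz,
            ← dist_eq_norm, inv_mul_cancel₀ (ne_of_gt hdxz)]
        have happ : ⟪wc, wc⟫ - c * ⟪nc, wc⟫ = 0 := by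
          have := congrArg (fun (T : E →L[ℝ] ℝ) => T wc) hzero
          simpa using this
        have hwc1 : ⟪wc, wc⟫ = 1 := by
          rw [real_inner_self_eq_norm_sq, hwcn]; norm_num
        have hcs : ⟪nc, wc⟫ ≤ 1 := by
          have := real_inner_le_norm nc wc
          rwa [hncn, hwcn, one_mul] at this
        nlinarith
  -- apply the claim along a sequence cₖ → 1 and pass to the limit
  have hcs : ∀ k : ℕ, ∃ x : E, dist x z0 = R ∧ t0 + (1 - 1/((k:ℝ)+1)) * R ≤ infDist x A := by
    intro k
    refine claim (1 - 1/((k:ℝ)+1)) ?_ ?_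
    · have h1 : 1/((k:ℝ)+1) ≤ 1 := by
        rw [div_le_one (by positivity)]
        have h2 : (0:ℝ) ≤ (k:ℝ) := Nat.cast_nonneg k
        linarith
      linarith
    · have h1 : 0 < 1/((k:ℝ)+1) := by positivity
      linarith
  choose xs hxs1 hxs2 using hcs
  have hxsphere : ∀ k, xs k ∈ sphere z0 R := fun k => by
    rw [mem_sphere]; exact hxs1 k
  obtain ⟨xh, hxh, ψ, hψ, hxht⟩ := (isCompact_sphere z0 R).tendsto_subseq hxsphere
  have hclim : Tendsto (fun k : ℕ => t0 + (1 - 1/((ψ k : ℝ)+1)) * R) atTop (𝓝 (t0 + R)) := by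
    have h1 : Tendsto (fun k : ℕ => 1/((k:ℝ)+1)) atTop (𝓝 0) :=
      tendsto_one_div_add_atTop_nhds_zero_nat
    have h2 : Tendsto (fun k : ℕ => 1/((ψ k : ℝ)+1)) atTop (𝓝 0) :=
      h1.comp hψ.tendsto_atTop
    have h3 : Tendsto (fun k : ℕ => t0 + (1 - 1/((ψ k : ℝ)+1)) * R) atTop
        (𝓝 (t0 + (1 - 0) * R)) :=
      (((tendsto_const_nhds (x := (1:ℝ))).sub h2).mul_const R).const_add t0
    simpa using h3
  have hulim : Tendsto (fun k => infDist (xs (ψ k)) A) atTop (𝓝 (infDist xh A)) :=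
    ((continuous_infDist_pt A).tendsto xh).comp hxht
  have hxhge : t0 + R ≤ infDist xh A :=
    le_of_tendsto_of_tendsto hclim hulim (Eventually.of_forall fun k => hxs2 (ψ k))
  have hdist : dist xh z0 = R := mem_sphere.1 hxh
  have hxhle : infDist xh A ≤ t0 + R := by
    have h1 := infDist_le_infDist_add_dist (x := xh) (y := z0) (s := A)
    rw [hdist, ← ht0] at h1
    linarith
  have hxheq : infDist xh A = t0 + R := le_antisymm hxhle hxhge
  have hdξ : dist xh ξ = t0 + R := by
    have h1 : infDist xh A ≤ dist xh ξ := infDist_le_dist_of_mem hξA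
    have h2 : dist xh ξ ≤ dist xh z0 + dist z0 ξ := dist_triangle _ _ _
    rw [hdist, hξd, ← ht0] at h2
    rw [hxheq] at h1
    linarith
  have h4 : ‖xh - z0‖ = R := by rw [← dist_eq_norm, hdist]
  have h5 : ‖z0 - ξ‖ = t0 := by rw [← dist_eq_norm, hξd, ← ht0]
  have hinner : ⟪xh - z0, z0 - ξ⟫ = R * t0 := by
    have hexp : ‖(xh - z0) + (z0 - ξ)‖^2 =
        ‖xh - z0‖^2 + 2*⟪xh - z0, z0 - ξ⟫ + ‖z0 - ξ‖^2 := norm_add_sq_real _ _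
    have h3 : ‖(xh - z0) + (z0 - ξ)‖ = t0 + R := by
      rw [show (xh - z0) + (z0 - ξ) = xh - ξ by abel, ← dist_eq_norm, hdξ]
    rw [h3, h4, h5] at hexp
    nlinarith [hexp]
  have hcol : t0 • (xh - z0) = R • (z0 - ξ) := by
    have := inner_eq_norm_mul_iff_real.1 (by rw [hinner, h4, h5] :
      ⟪xh - z0, z0 - ξ⟫ = ‖xh - z0‖ * ‖z0 - ξ‖)
    rwa [h4, h5] at this
  have hxz0 : xh - z0 = (R * t0⁻¹) • (z0 - ξ) := by
    have h6 := congrArg (fun v : E => t0⁻¹ • v) hcol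
    simp only [smul_smul] at h6
    rw [inv_mul_cancel₀ (ne_of_gt hpos), one_smul] at h6
    rw [h6, mul_comm]
  have hxw : xh - ξ = (t0 + R) • w := by
    rw [hw, show xh - ξ = (xh - z0) + (z0 - ξ) by abel, hxz0, smul_smul,
      show (t0 + R) * t0⁻¹ = 1 + R * t0⁻¹ by field_simp]
    rw [add_smul, one_smul]
    abel
  intro b hb
  have hge : t0 + R ≤ dist xh b := by
    rw [← hxheq]; exact infDist_le_dist_of_mem hb
  have htR : 0 < t0 + R := by linarith
  have hsq : (t0 + R)^2 ≤ ‖b - xh‖^2 := by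
    rw [← dist_eq_norm, dist_comm b xh]
    exact pow_le_pow_left₀ htR.le hge 2
  have hbx : b - xh = (b - ξ) - (t0 + R) • w := by rw [← hxw]; abel
  have hexp2 : ‖(b - ξ) - (t0 + R) • w‖^2 =
      ‖b - ξ‖^2 - 2*⟪b - ξ, (t0 + R) • w⟫ + ‖(t0 + R) • w‖^2 := norm_sub_sq_real _ _
  have h7 : ‖(t0 + R) • w‖^2 = (t0 + R)^2 := by
    rw [norm_smul, hwn, Real.norm_eq_abs, abs_of_pos htR]; ring
  have h8 : ⟪b - ξ, (t0 + R) • w⟫ = (t0 + R) * ⟪b - ξ, w⟫ := real_inner_smul_right _ _ _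
  rw [hbx] at hsq
  rw [hexp2, h7, h8] at hsq
  have h9 : ⟪b - ξ, w⟫ ≤ ‖b - ξ‖^2 / (2*(t0 + R)) := by
    rw [le_div_iff₀ (by linarith)]
    nlinarith [hsq]
  have h10 : ⟪w, b - ξ⟫ = ⟪b - ξ, w⟫ := real_inner_comm _ _
  rw [h10]
  refine h9.trans ?_
  apply div_le_div_of_nonneg_left (by positivity) (by linarith) (by linarith)

end Part3

section Part4

lemma exists_unp_radius {A : Set E} {a : E} (h : 0 < locReach A a) :
    ∃ ρ : ℝ, 0 < ρ ∧ ∀ x : E, dist x a < ρ → UnpPt A x := by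
  rw [locReach, lt_iSup_iff] at h
  obtain ⟨r, hr⟩ := h
  rw [lt_iSup_iff] at hr
  obtain ⟨hP, hr0⟩ := hr
  exact ⟨r, by exact_mod_cast hr0, hP⟩

end Part4

/-- A closed cone contained in the interior of the tangent cone (plus 0) is locally
contained in the set. -/
theorem stmt2 {d : ℕ} (A : Set (EuclideanSpace ℝ (Fin d)))
    (a : EuclideanSpace ℝ (Fin d)) (ha : a ∈ A) (h : 0 < locReach A a)
    (C : Set (EuclideanSpace ℝ (Fin d)))
    (hCclosed : IsClosed C)
    (hCcone : ∀ u ∈ C, ∀ t : ℝ, 0 ≤ t → t • u ∈ C)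
    (hC : C ⊆ interior (Tan A a) ∪ {0}) :
    ∃ r > (0 : ℝ), ((fun u => a + u) '' C) ∩ ball a r ⊆ A := by
  by_contra hcon
  push_neg at hcon
  obtain ⟨ρ, hρpos, hρ⟩ := exists_unp_radius h
  have hAne : A.Nonempty := ⟨a, ha⟩
  -- extract a sequence of small cone points outside A
  have hseq : ∀ n : ℕ, ∃ u : EuclideanSpace ℝ (Fin d), u ∈ C ∧ ‖u‖ < min (1/((n:ℝ)+1)) (ρ/16) ∧ a + u ∉ A := by
    intro n
    have hrpos : 0 < min (1/((n:ℝ)+1)) (ρ/16) := lt_min (by positivity) (by linarith)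
    obtain ⟨x, hx, hxA⟩ := Set.not_subset.1 (hcon _ hrpos)
    obtain ⟨⟨v, hvC, hvx⟩, hxball⟩ := hx
    have hvx' : a + v = x := hvx
    refine ⟨v, hvC, ?_, by rw [hvx']; exact hxA⟩
    have h1 : dist x a < min (1/((n:ℝ)+1)) (ρ/16) := mem_ball.1 hxball
    rw [← hvx'] at h1
    calc ‖v‖ = dist (a + v) a := by rw [dist_eq_norm]; congr 1; abel
    _ < _ := h1
  choose u huC husmall huA using hseq
  have hune : ∀ n, u n ≠ 0 := fun n h0 => huA n (by rw [h0, add_zero]; exact ha)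
  have hupos : ∀ n, 0 < ‖u n‖ := fun n => norm_pos_iff.2 (hune n)
  have husm : ∀ n, ‖u n‖ < ρ/16 := fun n => lt_of_lt_of_le (husmall n) (min_le_right _ _)
  have hu1 : ∀ n, ‖u n‖ < 1/((n:ℝ)+1) := fun n => lt_of_lt_of_le (husmall n) (min_le_left _ _)
  have hulim : Tendsto (fun n => ‖u n‖) atTop (𝓝 0) :=
    squeeze_zero (fun n => norm_nonneg _) (fun n => (hu1 n).le)
      tendsto_one_div_add_atTop_nhds_zero_nat
  set b : ℕ → EuclideanSpace ℝ (Fin d) := fun n => a + u n with hb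
  have hbdist : ∀ n, dist (b n) a = ‖u n‖ := by
    intro n; rw [dist_eq_norm]; congr 1; simp [hb]
  have hbball : ∀ n, dist (b n) a < ρ/16 := fun n => by rw [hbdist]; exact husm n
  have hbpos : ∀ n, 0 < infDist (b n) A := by
    intro n
    rcases eq_or_lt_of_le (infDist_nonneg (s := A) (x := b n)) with h0 | h0
    · exfalso
      have hcl : b n ∈ closure A := (mem_closure_iff_infDist_zero hAne).2 h0.symm
      exact huA n (mem_of_closure_unp (hρ (b n) (by have := hbball n; linarith)) hAne hcl)
    · exact h0
  set ξ : ℕ → EuclideanSpace ℝ (Fin d) := fun n => foot A (b n) with hξ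
  have hfoot : ∀ n, ξ n ∈ A ∧ dist (b n) (ξ n) = infDist (b n) A := fun n =>
    foot_spec (hρ (b n) (by have := hbball n; linarith))
  set t : ℕ → ℝ := fun n => infDist (b n) A with ht
  have htle : ∀ n, t n ≤ ‖u n‖ := fun n => by
    simp only [ht]
    rw [← hbdist n]; exact infDist_le_dist_of_mem ha
  set w : ℕ → EuclideanSpace ℝ (Fin d) := fun n => (t n)⁻¹ • (b n - ξ n) with hwdef
  have hwn : ∀ n, ‖w n‖ = 1 := by
    intro n
    have hd : dist (b n) (ξ n) = t n := (hfoot n).2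
    simp only [hwdef]
    rw [norm_smul, Real.norm_eq_abs, abs_inv, abs_of_pos (hbpos n), ← dist_eq_norm, hd,
      inv_mul_cancel₀ (ne_of_gt (hbpos n))]
  have hkey : ∀ n, ∀ bb ∈ A, ⟪w n, bb - ξ n⟫ ≤ ‖bb - ξ n‖^2/(2*(ρ/8)) := fun n =>
    reach_ray ha hρ (by have := hbball n; linarith : dist (b n) a < ρ/8) (hbpos n)
  have hξa : Tendsto ξ atTop (𝓝 a) := by
    rw [tendsto_iff_dist_tendsto_zero]
    refine squeeze_zero (fun n => dist_nonneg) (fun n => ?_)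
      (by simpa using hulim.const_mul (2:ℝ))
    have h1 : dist (ξ n) a ≤ dist (ξ n) (b n) + dist (b n) a := dist_triangle _ _ _
    have h2 : dist (ξ n) (b n) ≤ ‖u n‖ := by
      rw [dist_comm, (hfoot n).2]; exact htle n
    have h3 := hbdist n
    calc dist (ξ n) a ≤ ‖u n‖ + ‖u n‖ := by rw [← h3]; linarith
    _ = 2 * ‖u n‖ := by ring
  set e : ℕ → EuclideanSpace ℝ (Fin d) := fun n => ‖u n‖⁻¹ • u n with he
  have hen : ∀ n, e n ∈ sphere (0:EuclideanSpace ℝ (Fin d)) 1 := by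
    intro n
    rw [mem_sphere_zero_iff_norm]
    simp only [he]
    rw [norm_smul, Real.norm_eq_abs, abs_inv,
      abs_of_pos (hupos n), inv_mul_cancel₀ (ne_of_gt (hupos n))]
  obtain ⟨eh, heh, φ, hφ, hetend⟩ := (isCompact_sphere (0:EuclideanSpace ℝ (Fin d)) 1).tendsto_subseq hen
  obtain ⟨wh, hwh, ψ, hψ, hwtend⟩ := (isCompact_sphere (0:EuclideanSpace ℝ (Fin d)) 1).tendsto_subseq
    (x := fun n => w (φ n)) (fun n => by rw [mem_sphere_zero_iff_norm]; exact hwn (φ n))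
  have hσ : StrictMono (φ ∘ ψ) := hφ.comp hψ
  have hetend2 : Tendsto (fun k => e (φ (ψ k))) atTop (𝓝 eh) := hetend.comp hψ.tendsto_atTop
  have hwtend2 : Tendsto (fun k => w (φ (ψ k))) atTop (𝓝 wh) := hwtend
  have hξtend2 : Tendsto (fun k => ξ (φ (ψ k))) atTop (𝓝 a) := hξa.comp hσ.tendsto_atTop
  have hutend2 : Tendsto (fun k => ‖u (φ (ψ k))‖) atTop (𝓝 0) := hulim.comp hσ.tendsto_atTop
  have hehC : eh ∈ C := hCclosed.mem_of_tendsto hetend2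
    (Eventually.of_forall fun k => hCcone _ (huC _) _ (by positivity))
  have hehn : ‖eh‖ = 1 := mem_sphere_zero_iff_norm.1 heh
  have hehne : eh ≠ 0 := fun h0 => by rw [h0, norm_zero] at hehn; exact one_ne_zero hehn.symm
  have hwhn : ‖wh‖ = 1 := mem_sphere_zero_iff_norm.1 hwh
  have hehint : eh ∈ interior (Tan A a) := by
    rcases hC hehC with h1 | h1
    · exact h1
    · exact absurd h1 (by simpa using hehne)
  obtain ⟨ε, hε, hball⟩ := Metric.mem_nhds_iff.1 (mem_interior_iff_mem_nhds.1 hehint)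
  -- the limit normal inequality at a
  have hwhNor : ∀ bb ∈ A, ⟪wh, bb - a⟫ ≤ ‖bb - a‖^2/(2*(ρ/8)) := by
    intro bb hbb
    have hL : Tendsto (fun k => ⟪w (φ (ψ k)), bb - ξ (φ (ψ k))⟫) atTop (𝓝 ⟪wh, bb - a⟫) :=
      hwtend2.inner (tendsto_const_nhds.sub hξtend2)
    have hR : Tendsto (fun k => ‖bb - ξ (φ (ψ k))‖^2/(2*(ρ/8))) atTop
        (𝓝 (‖bb - a‖^2/(2*(ρ/8)))) :=
      ((((tendsto_const_nhds.sub hξtend2).norm).pow 2).div_const _)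
    exact le_of_tendsto_of_tendsto hL hR
      (Eventually.of_forall fun k => hkey (φ (ψ k)) bb hbb)
  -- wh is a normal vector at a
  have hwhTan : ∀ v ∈ Tan A a, ⟪wh, v⟫ ≤ 0 := by
    intro v hv
    rcases hv with rfl | ⟨x, r, hxr, hxa, hrx⟩
    · simp
    · have hL : Tendsto (fun i => ⟪wh, r i • (x i - a)⟫) atTop (𝓝 ⟪wh, v⟫) :=
        tendsto_const_nhds.inner hrx
      have hxa0 : Tendsto (fun i => ‖x i - a‖) atTop (𝓝 0) := by
        have := tendsto_iff_dist_tendsto_zero.1 hxa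
        simpa [dist_eq_norm] using this
      have hR : Tendsto (fun i => ‖x i - a‖ * ‖r i • (x i - a)‖ / (2*(ρ/8))) atTop
          (𝓝 (0 * ‖v‖ / (2*(ρ/8)))) := (hxa0.mul hrx.norm).div_const _
      have hle : ∀ i, ⟪wh, r i • (x i - a)⟫ ≤ ‖x i - a‖ * ‖r i • (x i - a)‖ / (2*(ρ/8)) := by
        intro i
        have h1 := hwhNor (x i) (hxr i).1
        have hri : 0 < r i := (hxr i).2.2
        calc ⟪wh, r i • (x i - a)⟫ = r i * ⟪wh, x i - a⟫ := real_inner_smul_right _ _ _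
        _ ≤ r i * (‖x i - a‖^2/(2*(ρ/8))) := mul_le_mul_of_nonneg_left h1 hri.le
        _ = ‖x i - a‖ * ‖r i • (x i - a)‖ / (2*(ρ/8)) := by
            rw [norm_smul, Real.norm_eq_abs, abs_of_pos hri]; ring
      have := le_of_tendsto_of_tendsto hL hR (Eventually.of_forall hle)
      simpa using this
  -- strict negativity from the interior condition
  have hneg : ⟪wh, eh⟫ ≤ -(ε/2) := by
    have hmem : eh + (ε/2) • wh ∈ Tan A a := by
      apply hball
      rw [mem_ball, dist_eq_norm]
      have : eh + (ε/2) • wh - eh = (ε/2) • wh := by abel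
      rw [this, norm_smul, Real.norm_eq_abs, abs_of_pos (by linarith), hwhn, mul_one]
      linarith
    have h1 := hwhTan _ hmem
    rw [inner_add_right, real_inner_smul_right, real_inner_self_eq_norm_sq, hwhn] at h1
    nlinarith
  -- lower bound on ⟪w n, e n⟫
  have hlow : ∀ n, -(2*‖u n‖/(ρ/8)) ≤ ⟪w n, e n⟫ := by
    intro n
    have h1 : ⟪w n, a - ξ n⟫ ≤ ‖a - ξ n‖^2/(2*(ρ/8)) := hkey n a ha
    have h4 : ‖a - ξ n‖ ≤ 2*‖u n‖ := by
      have h5 : ‖a - ξ n‖ ≤ ‖a - b n‖ + ‖b n - ξ n‖ := by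
        rw [show a - ξ n = (a - b n) + (b n - ξ n) by abel]; exact norm_add_le _ _
      have h6 : ‖a - b n‖ = ‖u n‖ := by rw [norm_sub_rev, ← dist_eq_norm, hbdist]
      have h7 : ‖b n - ξ n‖ = t n := by rw [← dist_eq_norm]; exact (hfoot n).2
      have := htle n
      linarith
    have h8 : ‖a - ξ n‖^2 ≤ (2*‖u n‖)^2 := pow_le_pow_left₀ (norm_nonneg _) h4 2
    have hden : (0:ℝ) < 2*(ρ/8) := by linarith
    have h9 : ⟪w n, a - ξ n⟫ ≤ (2*‖u n‖)^2/(2*(ρ/8)) :=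
      h1.trans (by gcongr)
    have h10 : ⟪w n, ξ n - a⟫ ≥ -((2*‖u n‖)^2/(2*(ρ/8))) := by
      rw [show ξ n - a = -(a - ξ n) by abel, inner_neg_right]
      linarith
    have h3 : ⟪w n, b n - ξ n⟫ = t n := by
      have hd : ‖b n - ξ n‖ = t n := by rw [← dist_eq_norm]; exact (hfoot n).2
      simp only [hwdef]
      rw [real_inner_smul_left, real_inner_self_eq_norm_sq, hd, pow_two,
        inv_mul_cancel_left₀ (ne_of_gt (hbpos n))]
    have h2 : ⟪w n, u n⟫ = ⟪w n, b n - ξ n⟫ + ⟪w n, ξ n - a⟫ := by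
      rw [← inner_add_right]
      congr 1
      simp only [hb]
      abel
    have h11 : ⟪w n, u n⟫ ≥ t n - (2*‖u n‖)^2/(2*(ρ/8)) := by
      rw [h2, h3]; linarith
    have h12 : ⟪w n, e n⟫ = ‖u n‖⁻¹ * ⟪w n, u n⟫ := by
      simp only [he]
      rw [real_inner_smul_right]
    rw [h12]
    have hun := hupos n
    have htn : (0:ℝ) ≤ t n := infDist_nonneg
    have h13 : ‖u n‖⁻¹ * (t n - (2*‖u n‖)^2/(2*(ρ/8))) ≤ ‖u n‖⁻¹ * ⟪w n, u n⟫ :=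
      mul_le_mul_of_nonneg_left h11 (inv_nonneg.2 (norm_nonneg _))
    refine le_trans ?_ h13
    have hexp : ‖u n‖⁻¹ * (t n - (2*‖u n‖)^2/(2*(ρ/8))) =
        ‖u n‖⁻¹ * t n - 2*‖u n‖/(ρ/8) := by
      field_simp
    rw [hexp]
    have : 0 ≤ ‖u n‖⁻¹ * t n := mul_nonneg (inv_nonneg.2 (norm_nonneg _)) htn
    linarith
  -- pass to the limit: contradiction
  have hlimL : Tendsto (fun k => -(2*‖u (φ (ψ k))‖/(ρ/8))) atTop (𝓝 0) := by
    have := (hutend2.const_mul (2:ℝ)).div_const (ρ/8)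
    have h2 := this.neg
    simpa using h2
  have hlimR : Tendsto (fun k => ⟪w (φ (ψ k)), e (φ (ψ k))⟫) atTop (𝓝 ⟪wh, eh⟫) :=
    hwtend2.inner hetend2
  have hge0 : (0:ℝ) ≤ ⟪wh, eh⟫ :=
    le_of_tendsto_of_tendsto hlimL hlimR (Eventually.of_forall fun k => hlow (φ (ψ k)))
  linarith
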